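/- Dimension check for sl(N): the x → 0 limit of Z(x,1,1,−2,2,N), the universal quantum dimension of the Cartan product g·Y₂(β) at the sl(N) point, equals (1/9)(N−3)(N+3)(N²−1)², for all real N avoiding poles. -/

import Mathlib

/-- Contribution B(x,n,α,β,γ) of the roots with unit scalar product with θ
(Section 2 of the paper). -/
noncomputable def Bfac (x : ℝ) (n : ℕ) (a b g : ℝ) : ℝ :=
  ∏ j ∈ Finset.range n,
    (Real.sinh ((g + 2*b - ((j:ℝ) + 1 - 3) * a) * x / 4) /
        Real.sinh ((g - ((j:ℝ) + 1 - 1) * a) * x / 4)) *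
    (Real.sinh ((2*g + b - ((j:ℝ) + 1 - 3) * a) * x / 4) /
        Real.sinh ((b - ((j:ℝ) + 1 - 1) * a) * x / 4)) *
    (Real.sinh ((2*g + 2*b - ((j:ℝ) + 1 - 4) * a) * x / 4) /
        Real.sinh (-((j:ℝ) + 1) * a * x / 4))

/-- Contribution A(x,n,α,β,γ) of the black roots. -/
noncomputable def Afac (x : ℝ) (n : ℕ) (a b g : ℝ) : ℝ :=
  ∏ j ∈ Finset.range n,
    (Real.sinh ((2*g + 3*a - ((j:ℝ) + 1) * a) * x / 4) /
        Real.sinh ((2*b + a - ((j:ℝ) + 1) * a) * x / 4)) *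
    (Real.sinh ((2*g + b + 4*a - ((j:ℝ) + 1) * a) * x / 4) /
        Real.sinh ((b - ((j:ℝ) + 1) * a) * x / 4)) *
    (Real.sinh ((2*b + g + 3*a - ((j:ℝ) + 1) * a) * x / 4) /
        Real.sinh ((g + a - ((j:ℝ) + 1) * a) * x / 4))

/-- Contribution C₁(x,n,α,β,γ) of the green roots. -/
noncomputable def C1fac (x : ℝ) (n : ℕ) (a b g : ℝ) : ℝ :=
  ∏ j ∈ Finset.range n,
    Real.sinh ((2*b + 2*g + 4*a - ((j:ℝ) + 1) * a) * x / 4) /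
      Real.sinh ((2*g + 3*a - ((j:ℝ) + 1) * a) * x / 4)

/-- Contribution C₂(x,n,α,β,γ) of the red roots. -/
noncomputable def C2fac (x : ℝ) (n : ℕ) (a b : ℝ) : ℝ :=
  ∏ j ∈ Finset.range n,
    Real.sinh ((-a - 2*b + a * ((j:ℝ) + 1)) * x / 4) /
      Real.sinh (a * ((j:ℝ) + 1) * x / 4)

/-- Contribution F(x,k,l,α,β,γ) of g₂₀, g₀₂ and the remaining colored roots. -/
noncomputable def Ffac (x : ℝ) (k l : ℕ) (a b g : ℝ) : ℝ :=
  (Real.sinh ((2*b + 2*g - (2*(k:ℝ) + 2*(l:ℝ) - 3) * a) * x / 4) /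
      Real.sinh ((2*b + 2*g + 3*a) * x / 4)) *
  (Real.sinh ((2*g - (2*(l:ℝ) - 3) * a) * x / 4) / Real.sinh ((2*g + 3*a) * x / 4)) *
  (Real.sinh ((b + 2*g - ((k:ℝ) + 2*(l:ℝ) - 3) * a) * x / 4) /
      Real.sinh ((b + 2*g + 3*a) * x / 4)) *
  (Real.sinh ((b - (k:ℝ) * a) * x / 4) / Real.sinh (b * x / 4))

/-- Universal quantum dimension Z(x,k,l,α,β,γ) of the Cartan product
gᵏ·Y₂(β)ˡ: Z = F·A·B̃·C₁·C₂, with B̃(x,l,α,β,γ) = B(x,l,α,β,γ−β). -/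
noncomputable def Zdim (x : ℝ) (k l : ℕ) (a b g : ℝ) : ℝ :=
  Ffac x k l a b g * Afac x (k + l) a b g * Bfac x l a b (g - b) *
    C1fac x (k + 2*l) a b g * C2fac x k a b

noncomputable def Q (c d x : ℝ) : ℝ := Real.sinh (c*x/4) / Real.sinh (d*x/4)

lemma tendsto_sinh_div (c : ℝ) :
    Filter.Tendsto (fun x : ℝ => Real.sinh (c*x/4) / x) (nhdsWithin 0 {(0:ℝ)}ᶜ)
      (nhds (c/4)) := by
  have hd : HasDerivAt (fun x : ℝ => Real.sinh (c*x/4)) (c/4) 0 := by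
    have h1 : HasDerivAt (fun x : ℝ => c*x/4) (c/4) 0 := by
      simpa using ((hasDerivAt_id (0:ℝ)).const_mul c).div_const 4
    have h2 := (Real.hasDerivAt_sinh (c*0/4)).comp 0 h1
    simpa [Function.comp_def] using h2
  have h3 := hasDerivAt_iff_tendsto_slope.mp hd
  refine h3.congr (fun x => ?_)
  simp [slope_def_field]

lemma tendsto_Q (c d : ℝ) (hd : d ≠ 0) :
    Filter.Tendsto (fun x : ℝ => Q c d x) (nhdsWithin 0 {(0:ℝ)}ᶜ) (nhds (c/d)) := by
  have h := (tendsto_sinh_div c).div (tendsto_sinh_div d) (div_ne_zero hd (by norm_num))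
  have hcd : c/4/(d/4) = c/d :=
    div_div_div_cancel_right₀ (by norm_num) c d
  rw [hcd] at h
  refine h.congr' ?_
  filter_upwards [self_mem_nhdsWithin] with x hx
  have hx' : (x:ℝ) ≠ 0 := hx
  simp only [Q, Pi.div_apply]
  rw [div_div_div_cancel_right₀ hx']

/-- Dimension check for sl(N): the x → 0 limit of Z(x,1,1,−2,2,N) equals
(1/9)(N−3)(N+3)(N²−1)². -/
theorem stmt_19 (N : ℝ) (h0 : N ≠ 0) (h1 : N ≠ 1) (h2 : N ≠ 2) (h3 : N ≠ 3)
    (hm2 : N ≠ -2) :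
    Filter.Tendsto (fun x => Zdim x 1 1 (-2) 2 N) (nhdsWithin 0 {(0:ℝ)}ᶜ)
      (nhds ((1/9) * (N - 3) * (N + 3) * (N^2 - 1)^2)) := by
  have hA : (2*N-2) ≠ 0 := fun h => h1 (by linarith)
  have hB : (2*N-6) ≠ 0 := fun h => h3 (by linarith)
  have hC : (2*N-4) ≠ 0 := fun h => h2 (by linarith)
  have hD : (2*N) ≠ 0 := fun h => h0 (by linarith)
  have hP : (N+2) ≠ 0 := fun h => hm2 (by linarith)
  have hM : (N-2) ≠ 0 := fun h => h2 (by linarith)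
  have h2r : (2:ℝ) ≠ 0 := by norm_num
  have h4r : (4:ℝ) ≠ 0 := by norm_num
  have h6r : (6:ℝ) ≠ 0 := by norm_num
  have hm2r : (-2:ℝ) ≠ 0 := by norm_num
  have heq : (fun x => Zdim x 1 1 (-2) 2 N)
      = (fun x => Q (2*N+6) (2*N-2) x * Q (2*N-2) (2*N-6) x * Q (2*N+2) (2*N-4) x * Q (4) (2) x * Q (2*N-4) (4) x * Q (2*N-4) (4) x * Q (N) (N) x * Q (2*N-2) (6) x * Q (2*N-2) (6) x * Q (N+2) (N+2) x * Q (N-2) (N-2) x * Q (2*N-6) (2) x * Q (2*N-6) (2) x * Q (2*N-2) (2*N-4) x * Q (2*N) (2*N-2) x * Q (2*N+2) (2*N) x * Q (-4) (-2) x) := by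
    funext x
    simp only [Zdim, Ffac, Afac, Bfac, C1fac, C2fac, Q, Finset.prod_range_succ,
      Finset.prod_range_zero, Nat.cast_ofNat, Nat.cast_one, Nat.cast_zero]
    push_cast
    ring_nf
  have hval : (1/9 : ℝ) * (N - 3) * (N + 3) * (N^2 - 1)^2 = ((2*N+6)/(2*N-2)) * ((2*N-2)/(2*N-6)) * ((2*N+2)/(2*N-4)) * ((4)/(2)) * ((2*N-4)/(4)) * ((2*N-4)/(4)) * ((N)/(N)) * ((2*N-2)/(6)) * ((2*N-2)/(6)) * ((N+2)/(N+2)) * ((N-2)/(N-2)) * ((2*N-6)/(2)) * ((2*N-6)/(2)) * ((2*N-2)/(2*N-4)) * ((2*N)/(2*N-2)) * ((2*N+2)/(2*N)) * ((-4)/(-2)) := by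
    field_simp
    rw [mul_div_cancel_right₀ _ (fun h => hC (by linarith))]
    ring
  rw [heq, hval]
  exact ((((((((((((((((tendsto_Q (2*N+6) (2*N-2) hA).mul (tendsto_Q (2*N-2) (2*N-6) hB)).mul (tendsto_Q (2*N+2) (2*N-4) hC)).mul (tendsto_Q (4) (2) h2r)).mul (tendsto_Q (2*N-4) (4) h4r)).mul (tendsto_Q (2*N-4) (4) h4r)).mul (tendsto_Q (N) (N) h0)).mul (tendsto_Q (2*N-2) (6) h6r)).mul (tendsto_Q (2*N-2) (6) h6r)).mul (tendsto_Q (N+2) (N+2) hP)).mul (tendsto_Q (N-2) (N-2) hM)).mul (tendsto_Q (2*N-6) (2) h2r)).mul (tendsto_Q (2*N-6) (2) h2r)).mul (tendsto_Q (2*N-2) (2*N-4) hC)).mul (tendsto_Q (2*N) (2*N-2) hA)).mul (tendsto_Q (2*N+2) (2*N) hD)).mul (tendsto_Q (-4) (-2) hm2r)
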